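/- Let A be a reduced commutative Noetherian Jacobson ring, M a finite projective A-module, and N_1, N_2 ⊆ M two A-submodules which are direct summands of rank r. If for every maximal ideal m of A the images of N_1 and N_2 in M ⊗_A A/m coincide, then N_1 = N_2. -/

import Mathlib

open scoped TensorProduct

/-- A submodule `N ≤ M` is a *direct summand of rank `r`* if it has a complement and is
projective of constant rank `r`. -/
def IsSummandOfRank (A : Type) [CommRing A] {M : Type} [AddCommGroup M] [Module A M]
    (N : Submodule A M) (r : ℕ) : Prop :=
  (∃ C : Submodule A M, IsCompl N C) ∧ Module.Projective A N ∧ Module.Finite A N ∧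
    ∀ p : PrimeSpectrum A,
      Module.finrank (Localization.AtPrime p.asIdeal)
        (LocalizedModule p.asIdeal.primeCompl N) = r

/-- In a reduced Jacobson ring, an element of every maximal ideal is zero. -/
lemma eq_zero_of_mem_all_max {A : Type} [CommRing A] [IsReduced A] [IsJacobsonRing A]
    (a : A) (ha : ∀ m : Ideal A, m.IsMaximal → a ∈ m) : a = 0 := by
  have hrad : (⊥ : Ideal A).IsRadical := by
    rw [← Ideal.radical_eq_iff]
    have : (⊥ : Ideal A).radical = nilradical A := rfl
    rw [this, nilradical_eq_zero]
    rfl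
  have hjac : (⊥ : Ideal A).jacobson = ⊥ := IsJacobsonRing.out ‹_› hrad
  have : a ∈ (⊥ : Ideal A).jacobson := by
    rw [Ideal.jacobson]
    exact Ideal.mem_sInf.mpr fun {J} hJ => ha J hJ.2
  rwa [hjac, Ideal.mem_bot] at this

/-- Coordinates of elements of `m • ⊤` in a finsupp module lie in `m`. -/
lemma coord_mem {A : Type} [CommRing A] {ι : Type} (m : Ideal A)
    {f : ι →₀ A} (hf : f ∈ m • (⊤ : Submodule A (ι →₀ A))) (i : ι) : f i ∈ m := by
  refine Submodule.smul_induction_on hf ?_ ?_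
  · intro r hr n _
    simpa using m.mul_mem_right (n i) hr
  · intro x y hx hy
    simpa using m.add_mem hx hy

/-- In a projective module over a reduced Jacobson ring, an element of `m • ⊤` for
all maximal `m` is zero. -/
lemma eq_zero_of_mem_all_smul {A : Type} [CommRing A] [IsReduced A] [IsJacobsonRing A]
    {M : Type} [AddCommGroup M] [Module A M] [Module.Projective A M]
    (x : M) (hx : ∀ m : Ideal A, m.IsMaximal → x ∈ m • (⊤ : Submodule A M)) : x = 0 := by
  obtain ⟨s, hs⟩ := Module.projective_def'.mp ‹Module.Projective A M›
  have hsx : s x = 0 := by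
    ext i
    refine eq_zero_of_mem_all_max _ fun m hm => ?_
    have : s x ∈ m • (⊤ : Submodule A (M →₀ A)) := by
      have : s x ∈ (m • (⊤ : Submodule A M)).map s :=
        Submodule.mem_map_of_mem (hx m hm)
      rw [Submodule.map_smul''] at this
      exact Submodule.smul_mono le_rfl le_top this
    exact coord_mem m this i
  have := congrFun (congrArg DFunLike.coe hs) x
  simp only [LinearMap.coe_comp, Function.comp_apply, LinearMap.id_coe, id_eq] at this
  rw [← this, hsx, map_zero]

/-- One-sided inclusion from fiberwise containment. -/
lemma le_of_le_sup_smul {A : Type} [CommRing A] [IsReduced A] [IsJacobsonRing A]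
    {M : Type} [AddCommGroup M] [Module A M] [Module.Projective A M]
    {N₁ N₂ : Submodule A M} (C : Submodule A M) (hC : IsCompl N₂ C)
    (h : ∀ m : Ideal A, m.IsMaximal → N₁ ≤ N₂ ⊔ m • (⊤ : Submodule A M)) :
    N₁ ≤ N₂ := by
  intro x hx
  set π : M →ₗ[A] M := C.subtype ∘ₗ Submodule.projectionOnto C N₂ hC.symm with hπ
  have hπx : π x = 0 := by
    refine eq_zero_of_mem_all_smul (A := A) (π x) fun m hm => ?_
    obtain ⟨y, hy, z, hz, rfl⟩ := Submodule.mem_sup.mp (h m hm hx)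
    have hπy : π y = 0 := by
      simp [hπ, Submodule.projectionOnto_apply_of_mem_right hC.symm hy]
    have hπz : π z ∈ m • (⊤ : Submodule A M) := by
      have : π z ∈ (m • (⊤ : Submodule A M)).map π := Submodule.mem_map_of_mem hz
      rw [Submodule.map_smul''] at this
      exact Submodule.smul_mono le_rfl le_top this
    rw [map_add, hπy, zero_add]
    exact hπz
  have : Submodule.projectionOnto C N₂ hC.symm x = 0 := by
    have := hπx
    simp only [hπ, LinearMap.coe_comp, Function.comp_apply, Submodule.coe_subtype] at this
    exact_mod_cast this
  exact (Submodule.projectionOnto_apply_eq_zero_iff hC.symm).mp this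

/-- Let `A` be a reduced Noetherian Jacobson ring, `M` finite
projective over `A`, and `N₁, N₂ ⊆ M` direct summands of rank `r`.  If for every
maximal ideal `m` the images of `N₁` and `N₂` in `M ⊗_A A/m = M / mM` coincide, then
`N₁ = N₂`. -/
theorem summands_eq_of_equal_fibers
    (A : Type) [CommRing A] [IsNoetherianRing A] [IsReduced A] [IsJacobsonRing A]
    (M : Type) [AddCommGroup M] [Module A M] [Module.Finite A M]
    [Module.Projective A M]
    (r : ℕ) (N₁ N₂ : Submodule A M)
    (h₁ : IsSummandOfRank A N₁ r) (h₂ : IsSummandOfRank A N₂ r)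
    (hfib : ∀ (m : Ideal A) (_ : m.IsMaximal),
      N₁.map (Submodule.mkQ (m • (⊤ : Submodule A M))) =
        N₂.map (Submodule.mkQ (m • (⊤ : Submodule A M)))) :
    N₁ = N₂ := by
  obtain ⟨⟨C₁, hC₁⟩, -, -, -⟩ := h₁
  obtain ⟨⟨C₂, hC₂⟩, -, -, -⟩ := h₂
  have key : ∀ (P Q : Submodule A M) (_ : ∀ m : Ideal A, m.IsMaximal →
      P.map (Submodule.mkQ (m • (⊤ : Submodule A M))) =
        Q.map (Submodule.mkQ (m • (⊤ : Submodule A M)))),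
      ∀ m : Ideal A, m.IsMaximal → P ≤ Q ⊔ m • (⊤ : Submodule A M) := by
    intro P Q h m hm
    have : P ≤ Submodule.comap (Submodule.mkQ (m • (⊤ : Submodule A M)))
        (Q.map (Submodule.mkQ (m • (⊤ : Submodule A M)))) := by
      rw [← h m hm]
      exact Submodule.le_comap_map _ _
    rwa [Submodule.comap_map_mkQ, sup_comm] at this
  exact le_antisymm
    (le_of_le_sup_smul C₂ hC₂ (key N₁ N₂ hfib))
    (le_of_le_sup_smul C₁ hC₁ (key N₂ N₁ fun m hm => (hfib m hm).symm))
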